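/- Let ν^t := μ^{π*,p̂^t} be occupancy sequences (for a fixed policy π*) induced by kernel estimates p̂^t satisfying ‖ν^t − ν^{t+1}‖_{∞,1} ≤ 2N/t, and suppose each mixed policy π̃^t satisfies π̃^t_n(a|x) ≥ α_t/|A|, so that ‖∇ψ(μ̃^t)‖_{1,∞} ≤ N log(|A|/α_t) where ψ is the conditional-negentropy potential. Then Σ_{t=1}^T [ Γ(ν^{t+1}, μ̃^t) − Γ(ν^t, μ̃^t) ] ≤ −ψ(ν^1) + 2N² Σ_{t=1}^T log(|A|/α_t)/t, where Γ is the Bregman divergence induced by ψ. -/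

import Mathlib

open Finset

noncomputable section

variable {X A : Type*} [Fintype X] [Fintype A] [Nonempty A]

def IsDist {Y : Type*} [Fintype Y] (η : Y → ℝ) : Prop :=
  (∀ y, 0 ≤ η y) ∧ ∑ y, η y = 1

lemma psi_nonpos_aux {X A : Type*} [Fintype X] [Fintype A] (N : ℕ)
    (μ : ℕ → X × A → ℝ) (h : ∀ n y, 0 ≤ μ n y) :
    ∑ n ∈ Icc 1 N, ∑ x, ∑ a,
      μ n (x, a) * Real.log (μ n (x, a) / ∑ a', μ n (x, a')) ≤ 0 := by
  refine Finset.sum_nonpos fun n _ => Finset.sum_nonpos fun x _ =>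
    Finset.sum_nonpos fun a _ => ?_
  rcases eq_or_lt_of_le (h n (x, a)) with h0 | h0
  · simp [← h0]
  · have hs : μ n (x, a) ≤ ∑ a', μ n (x, a') :=
      Finset.single_le_sum (fun a' _ => h n (x, a')) (Finset.mem_univ a)
    have hspos : 0 < ∑ a', μ n (x, a') := lt_of_lt_of_le h0 hs
    have hlog : Real.log (μ n (x, a) / ∑ a', μ n (x, a')) ≤ 0 :=
      Real.log_nonpos (div_nonneg h0.le hspos.le)
        (div_le_one_of_le₀ hs hspos.le)
    exact mul_nonpos_of_nonneg_of_nonpos h0.le hlog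

/-- Varying-constraint-set bound: if consecutive occupancies `ν^t = μ^{π*,p̂^t}` satisfy
`‖ν^t − ν^{t+1}‖_{∞,1} ≤ 2N/t` and the mixed policies satisfy `π̃^t ≥ α_t/|A|`
(so that `‖∇ψ(μ̃^t)‖ ≤ N log(|A|/α_t)`), then
`Σ_t [Γ(ν^{t+1}, μ̃^t) − Γ(ν^t, μ̃^t)] ≤ −ψ(ν^1) + 2N² Σ_t log(|A|/α_t)/t`. -/
theorem sum_bregman_shift_bound (N T : ℕ) (hN : 1 ≤ N) (hT : 1 ≤ T)
    (α : ℕ → ℝ) (hα : ∀ t, 0 < α t)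
    (ν : ℕ → ℕ → X × A → ℝ) (hν : ∀ t n, IsDist (ν t n))
    (hνclose : ∀ t, 1 ≤ t → t ≤ T → ∀ n, 1 ≤ n → n ≤ N →
      ∑ y : X × A, |ν t n y - ν (t + 1) n y| ≤ 2 * N / t)
    (μt : ℕ → ℕ → X × A → ℝ) (hμt : ∀ t n, IsDist (μt t n))
    (πt : ℕ → ℕ → X → A → ℝ) (hπt : ∀ t n x, IsDist (πt t n x))
    (hπtlb : ∀ t n x a, α t / (Fintype.card A : ℝ) ≤ πt t n x a)
    (hgen : ∀ t n x a, μt t n (x, a) = (∑ a', μt t n (x, a')) * πt t n x a) :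
    -- the conditional-negentropy potential ψ
    let ψ : (ℕ → X × A → ℝ) → ℝ := fun μ =>
      ∑ n ∈ Icc 1 N, ∑ x, ∑ a,
        μ n (x, a) * Real.log (μ n (x, a) / ∑ a', μ n (x, a'))
    -- the Bregman divergence Γ(μ, μ̃^t) induced by ψ (with ∇ψ(μ̃^t) = log π̃^t)
    let Γ : (ℕ → X × A → ℝ) → ℕ → ℝ := fun μ t =>
      ψ μ - ψ (μt t) -
        ∑ n ∈ Icc 1 N, ∑ x, ∑ a,
          Real.log (πt t n x a) * (μ n (x, a) - μt t n (x, a))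
    ∑ t ∈ Icc 1 T, (Γ (ν (t + 1)) t - Γ (ν t) t) ≤
      -ψ (ν 1) +
        2 * (N : ℝ) ^ 2 *
          ∑ t ∈ Icc 1 T, Real.log ((Fintype.card A : ℝ) / α t) / t := by
  intro ψ Γ
  have hcard : (0 : ℝ) < Fintype.card A := by
    exact_mod_cast Fintype.card_pos
  have hXne : Nonempty X := by
    by_contra h
    have hIE : IsEmpty X := not_nonempty_iff.mp h
    have h1 := (hν 0 0).2
    rw [Fintype.sum_prod_type] at h1
    simp at h1
  obtain ⟨x0⟩ := hXne
  set L : ℕ → ℝ := fun t => Real.log ((Fintype.card A : ℝ) / α t) with hLdef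
  -- basic facts about πt
  have hπpos : ∀ t n x a, 0 < πt t n x a := fun t n x a =>
    lt_of_lt_of_le (div_pos (hα t) hcard) (hπtlb t n x a)
  have hπle1 : ∀ t n x a, πt t n x a ≤ 1 := by
    intro t n x a
    have := (hπt t n x).2
    calc πt t n x a ≤ ∑ a', πt t n x a' :=
          Finset.single_le_sum (fun a' _ => (hπt t n x).1 a') (Finset.mem_univ a)
      _ = 1 := (hπt t n x).2
  have hLnn : ∀ t, 0 ≤ L t := by
    intro t
    apply Real.log_nonneg
    rw [le_div_iff₀ (hα t), one_mul]
    calc α t = (α t / Fintype.card A) * Fintype.card A := by field_simp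
      _ ≤ πt t 0 x0 (Classical.arbitrary _) * Fintype.card A := by
          exact mul_le_mul_of_nonneg_right (hπtlb t 0 _ _) hcard.le
      _ ≤ 1 * Fintype.card A := by
          exact mul_le_mul_of_nonneg_right (hπle1 t 0 _ _) hcard.le
      _ = Fintype.card A := one_mul _
  have habslog : ∀ t n x a, |Real.log (πt t n x a)| ≤ L t := by
    intro t n x a
    rw [abs_le]
    constructor
    · have h1 : Real.log (α t / Fintype.card A) ≤ Real.log (πt t n x a) :=
        Real.log_le_log (div_pos (hα t) hcard) (hπtlb t n x a)
      have h2 : Real.log (α t / Fintype.card A) = -L t := by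
        rw [hLdef]
        rw [← Real.log_inv, inv_div]
      linarith
    · exact le_trans (Real.log_nonpos (hπpos t n x a).le (hπle1 t n x a)) (hLnn t)
  -- key per-step bound
  have key : ∀ t ∈ Icc 1 T, Γ (ν (t + 1)) t - Γ (ν t) t ≤
      (ψ (ν (t + 1)) - ψ (ν t)) + 2 * (N : ℝ) ^ 2 * (L t / t) := by
    intro t ht
    rw [Finset.mem_Icc] at ht
    have htpos : (0 : ℝ) < t := by exact_mod_cast ht.1
    have hS : (∑ n ∈ Icc 1 N, ∑ x, ∑ a,
          Real.log (πt t n x a) * (ν (t + 1) n (x, a) - μt t n (x, a)))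
        - ∑ n ∈ Icc 1 N, ∑ x, ∑ a,
          Real.log (πt t n x a) * (ν t n (x, a) - μt t n (x, a))
        = ∑ n ∈ Icc 1 N, ∑ x, ∑ a,
          Real.log (πt t n x a) * (ν (t + 1) n (x, a) - ν t n (x, a)) := by
      rw [← Finset.sum_sub_distrib]
      refine Finset.sum_congr rfl fun n _ => ?_
      rw [← Finset.sum_sub_distrib]
      refine Finset.sum_congr rfl fun x _ => ?_
      rw [← Finset.sum_sub_distrib]
      exact Finset.sum_congr rfl fun a _ => by ring
    have hEq : Γ (ν (t + 1)) t - Γ (ν t) t = (ψ (ν (t + 1)) - ψ (ν t)) -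
        ∑ n ∈ Icc 1 N, ∑ x, ∑ a,
          Real.log (πt t n x a) * (ν (t + 1) n (x, a) - ν t n (x, a)) := by
      simp only [Γ]
      linarith [hS]
    have habs : |∑ n ∈ Icc 1 N, ∑ x, ∑ a,
          Real.log (πt t n x a) * (ν (t + 1) n (x, a) - ν t n (x, a))|
        ≤ (N : ℝ) * (L t * (2 * N / t)) := by
      calc |∑ n ∈ Icc 1 N, ∑ x, ∑ a,
            Real.log (πt t n x a) * (ν (t + 1) n (x, a) - ν t n (x, a))|
          ≤ ∑ n ∈ Icc 1 N, |∑ x, ∑ a,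
            Real.log (πt t n x a) * (ν (t + 1) n (x, a) - ν t n (x, a))| :=
            Finset.abs_sum_le_sum_abs _ _
        _ ≤ ∑ n ∈ Icc 1 N, L t * (2 * N / t) := by
            refine Finset.sum_le_sum fun n hn => ?_
            rw [Finset.mem_Icc] at hn
            have hsum : ∑ x, ∑ a, |ν (t + 1) n (x, a) - ν t n (x, a)| ≤ 2 * N / t := by
              have := hνclose t ht.1 ht.2 n hn.1 hn.2
              rw [Fintype.sum_prod_type] at this
              calc ∑ x, ∑ a, |ν (t + 1) n (x, a) - ν t n (x, a)|
                  = ∑ x, ∑ a, |ν t n (x, a) - ν (t + 1) n (x, a)| := by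
                    refine Finset.sum_congr rfl fun x _ => Finset.sum_congr rfl fun a _ => ?_
                    exact abs_sub_comm _ _
                _ ≤ 2 * N / t := this
            calc |∑ x, ∑ a, Real.log (πt t n x a) * (ν (t + 1) n (x, a) - ν t n (x, a))|
                ≤ ∑ x, |∑ a, Real.log (πt t n x a) * (ν (t + 1) n (x, a) - ν t n (x, a))| :=
                  Finset.abs_sum_le_sum_abs _ _
              _ ≤ ∑ x, ∑ a, |Real.log (πt t n x a) * (ν (t + 1) n (x, a) - ν t n (x, a))| :=
                  Finset.sum_le_sum fun x _ => Finset.abs_sum_le_sum_abs _ _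
              _ ≤ ∑ x, ∑ a, L t * |ν (t + 1) n (x, a) - ν t n (x, a)| := by
                  refine Finset.sum_le_sum fun x _ => Finset.sum_le_sum fun a _ => ?_
                  rw [abs_mul]
                  exact mul_le_mul_of_nonneg_right (habslog t n x a) (abs_nonneg _)
              _ = L t * ∑ x, ∑ a, |ν (t + 1) n (x, a) - ν t n (x, a)| := by
                  rw [Finset.mul_sum]
                  exact Finset.sum_congr rfl fun x _ => (Finset.mul_sum _ _ _).symm
              _ ≤ L t * (2 * N / t) := mul_le_mul_of_nonneg_left hsum (hLnn t)
        _ = (N : ℝ) * (L t * (2 * N / t)) := by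
            rw [Finset.sum_const, Nat.card_Icc, nsmul_eq_mul]
            simp
    have hcalc : 2 * (N : ℝ) ^ 2 * (L t / t) = (N : ℝ) * (L t * (2 * N / t)) := by
      field_simp
    rw [hEq]
    have h1 := (abs_le.1 habs).1
    linarith
  have htel : ∀ S : ℕ, ∑ t ∈ Icc 1 S, (ψ (ν (t + 1)) - ψ (ν t)) = ψ (ν (S + 1)) - ψ (ν 1) := by
    intro S
    induction S with
    | zero => simp
    | succ k ih =>
        rw [Finset.sum_Icc_succ_top (by omega : 1 ≤ k + 1), ih]
        ring
  have hψneg : ψ (ν (T + 1)) ≤ 0 :=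
    psi_nonpos_aux N (ν (T + 1)) (fun n y => (hν (T + 1) n).1 y)
  calc ∑ t ∈ Icc 1 T, (Γ (ν (t + 1)) t - Γ (ν t) t)
      ≤ ∑ t ∈ Icc 1 T, ((ψ (ν (t + 1)) - ψ (ν t)) + 2 * (N : ℝ) ^ 2 * (L t / t)) :=
        Finset.sum_le_sum key
    _ = (ψ (ν (T + 1)) - ψ (ν 1)) + 2 * (N : ℝ) ^ 2 * ∑ t ∈ Icc 1 T, L t / t := by
        rw [Finset.sum_add_distrib, htel T, ← Finset.mul_sum]
    _ ≤ -ψ (ν 1) + 2 * (N : ℝ) ^ 2 * ∑ t ∈ Icc 1 T, L t / t := by linarith
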